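/- If f is a nonzero minimal integer flow on a sequence graph, then there exists a tight even-length cycle traversal of length L = ‖f‖₁ whose alternating flow equals f. -/

import Mathlib

open scoped Classical
open Finset

noncomputable section

/-- A sequence graph: finite multigraph whose edges are split into segment
edges (`seg`) and bond edges, each segment edge having two distinct endpoints. -/
structure SeqGraph (V E : Type) where
  ends : E → Sym2 V
  seg : E → Prop
  seg_not_diag : ∀ x : E, seg x → ¬ (ends x).IsDiag

namespace SeqGraph

variable {V E : Type} [Fintype V] [Fintype E]

/-- Incidence multiplicity of vertex `u` on edge `x`. -/
def mult (G : SeqGraph V E) (u : V) (x : E) : ℤ :=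
  if G.ends x = s(u, u) then 2 else if u ∈ G.ends x then 1 else 0

/-- The balance condition: at each vertex the total weight of segment-edge
incidences equals the total weight of bond-edge incidences. -/
def IsFlow (G : SeqGraph V E) (f : E → ℤ) : Prop :=
  ∀ u : V,
    (∑ x : E, if G.seg x then G.mult u x * f x else 0) =
      ∑ x : E, if G.seg x then 0 else G.mult u x * f x

/-- ℓ¹ norm of an integer weighting. -/
def l1 (f : E → ℤ) : ℤ := ∑ x : E, |f x|

/-- A (nonzero) integer flow is minimal if it admits no nontrivial ℓ¹-additive
decomposition into nonzero integer flows. -/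
def MinimalFlow (G : SeqGraph V E) (f : E → ℤ) : Prop :=
  ¬ ∃ f₁ f₂ : E → ℤ, G.IsFlow f₁ ∧ G.IsFlow f₂ ∧ f₁ ≠ 0 ∧ f₂ ≠ 0 ∧
      f = f₁ + f₂ ∧ l1 f = l1 f₁ + l1 f₂

/-- A cycle traversal of length `L ≥ 1`. -/
structure CycleTraversal (G : SeqGraph V E) where
  L : ℕ
  pos : L ≠ 0
  e : ZMod L → E
  v : ZMod L → V
  compat : ∀ i : ZMod L, G.ends (e i) = s(v (i - 1), v i)

variable {G : SeqGraph V E}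

/-- Number of indices at which the traversal uses edge `x`. -/
def CycleTraversal.threadCount (t : G.CycleTraversal) (x : E) : ℕ :=
  haveI : NeZero t.L := ⟨t.pos⟩
  (Finset.univ.filter fun i : ZMod t.L => t.e i = x).card

/-- The thread flow of a traversal. -/
def CycleTraversal.threadFlow (t : G.CycleTraversal) : E → ℤ :=
  fun x => (t.threadCount x : ℤ)

/-- A sequence traversal: even length, alternating between segment edges
(at even indices) and bond edges (at odd indices). -/
def CycleTraversal.IsSeqTraversal (t : G.CycleTraversal) : Prop :=
  Even t.L ∧ ∀ i : ZMod t.L, G.seg (t.e i) ↔ Even i.val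

/-- Alternating weighting `∑ i, (-1)^i δ_{e i}` of an (even-length) traversal. -/
def CycleTraversal.altWeight (t : G.CycleTraversal) : E → ℤ :=
  haveI : NeZero t.L := ⟨t.pos⟩
  fun x => ∑ i : ZMod t.L, if t.e i = x then (-1 : ℤ) ^ i.val else 0

/-- Conjugate weighting: keep the value on segment edges, negate on bonds. -/
def conj (G : SeqGraph V E) (g : E → ℤ) : E → ℤ :=
  fun x => if G.seg x then g x else -g x

/-- Alternating flow: the conjugate of the alternating weighting. -/
def CycleTraversal.altFlow (t : G.CycleTraversal) : E → ℤ :=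
  G.conj t.altWeight

/-- Tight: equal edges only appear at indices of equal parity. -/
def CycleTraversal.Tight (t : G.CycleTraversal) : Prop :=
  ∀ i j : ZMod t.L, t.e i = t.e j → i.val % 2 = j.val % 2

/-- Synchronized: coinciding (distinct, same end vertex) indices differ by an
odd integer. -/
def CycleTraversal.Synchronized (t : G.CycleTraversal) : Prop :=
  ∀ i j : ZMod t.L, i ≠ j → t.v i = t.v j → Odd ((i.val : ℤ) - (j.val : ℤ))

/-- Nested: no interleaved pairs of coinciding indices. -/
def CycleTraversal.Nested (t : G.CycleTraversal) : Prop :=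
  ¬ ∃ i₁ i₂ j₁ j₂ : ZMod t.L,
      i₁.val < i₂.val ∧ i₂.val < j₁.val ∧ j₁.val < j₂.val ∧
      t.v i₁ = t.v j₁ ∧ t.v i₂ = t.v j₂

/-- Connectivity: any two vertices are joined by a finite walk along edges. -/
def Connected (G : SeqGraph V E) : Prop :=
  ∀ a b : V, ∃ (n : ℕ) (p : Fin (n + 1) → V), p 0 = a ∧ p (Fin.last n) = b ∧
    ∀ i : Fin n, ∃ x : E, G.ends x = s(p i.castSucc, p i.succ)

end SeqGraph

namespace SeqGraph

set_option linter.unusedSectionVars false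
set_option linter.unreachableTactic false
set_option linter.unusedTactic false
variable {V E : Type} [Fintype V] [Fintype E] {G : SeqGraph V E}

def ZeroSum (G : SeqGraph V E) (g : E → ℤ) : Prop :=
  ∀ u : V, ∑ x : E, G.mult u x * g x = 0

lemma conj_conj (g : E → ℤ) : G.conj (G.conj g) = g := by
  funext x; unfold conj; by_cases h : G.seg x <;> simp [h]

lemma conj_sub (g h : E → ℤ) : G.conj (fun x => g x - h x) = fun x => G.conj g x - G.conj h x := by
  funext x; unfold conj; by_cases h : G.seg x <;> simp [h]; ring

lemma conj_eq_zero {g : E → ℤ} (h : G.conj g = 0) : g = 0 := by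
  funext x
  have := congrFun h x
  unfold conj at this
  by_cases hs : G.seg x <;> simp [hs] at this <;> simpa using this

lemma abs_conj (g : E → ℤ) (x : E) : |G.conj g x| = |g x| := by
  unfold conj; by_cases h : G.seg x <;> simp [h]

lemma l1_conj (g : E → ℤ) : l1 (G.conj g) = l1 g := by
  unfold l1; exact Finset.sum_congr rfl fun x _ => abs_conj g x

lemma isFlow_iff_zeroSum (f : E → ℤ) : G.IsFlow f ↔ G.ZeroSum (G.conj f) := by
  unfold IsFlow ZeroSum conj
  constructor
  · intro h u
    have := h u
    have e1 : ∑ x : E, G.mult u x * (if G.seg x then f x else -f x)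
        = (∑ x : E, if G.seg x then G.mult u x * f x else 0)
          - ∑ x : E, if G.seg x then 0 else G.mult u x * f x := by
      rw [← Finset.sum_sub_distrib]
      refine Finset.sum_congr rfl fun x _ => ?_
      by_cases hs : G.seg x <;> simp [hs] <;> ring
    rw [e1, this]; ring
  · intro h u
    have := h u
    have e1 : ∑ x : E, G.mult u x * (if G.seg x then f x else -f x)
        = (∑ x : E, if G.seg x then G.mult u x * f x else 0)
          - ∑ x : E, if G.seg x then 0 else G.mult u x * f x := by
      rw [← Finset.sum_sub_distrib]
      refine Finset.sum_congr rfl fun x _ => ?_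
      by_cases hs : G.seg x <;> simp [hs] <;> ring
    rw [e1] at this; linarith

lemma mult_eq {x : E} {p q : V} (h : G.ends x = s(p, q)) (u : V) :
    G.mult u x = (if u = p then 1 else 0) + (if u = q then 1 else 0) := by
  unfold mult
  by_cases hp : u = p <;> by_cases hq : u = q
  · subst hp; subst hq; simp [h]
  · subst hp
    have h1 : ¬ G.ends x = s(u, u) := by
      intro he; rw [h] at he
      rcases Sym2.eq_iff.mp he with ⟨h2, h3⟩ | ⟨h2, h3⟩ <;> exact hq h3.symm
    have h4 : ¬ q = u := fun h' => hq h'.symm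
    simp [h1, h, hq, h4]
  · subst hq
    have h1 : ¬ G.ends x = s(u, u) := by
      intro he; rw [h] at he
      rcases Sym2.eq_iff.mp he with ⟨h2, h3⟩ | ⟨h2, h3⟩ <;> exact hp h2.symm
    have h4 : ¬ p = u := fun h' => hp h'.symm
    simp [h1, h, hp, h4]
  · have h1 : ¬ G.ends x = s(u, u) := by
      intro he; rw [h] at he
      rcases Sym2.eq_iff.mp he with ⟨h2, h3⟩ | ⟨h2, h3⟩ <;> exact hp h2.symm
    have h2 : ¬ u ∈ G.ends x := by
      rw [h, Sym2.mem_iff]; push_neg; exact ⟨hp, hq⟩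
    simp [h1, h2, hp, hq]

lemma mult_zero_of_not_mem {x : E} {u : V} (h : ¬ u ∈ G.ends x) : G.mult u x = 0 := by
  unfold mult
  have h1 : ¬ G.ends x = s(u, u) := fun he => h (by rw [he]; exact Sym2.mem_mk_left u u)
  simp [h1, h]

lemma mult_nonneg (u : V) (x : E) : 0 ≤ G.mult u x := by
  unfold mult; split <;> [norm_num; skip]; split <;> norm_num

end SeqGraph
namespace SeqGraph

set_option linter.unusedSectionVars false
variable {V E : Type} [Fintype V] [Fintype E] {G : SeqGraph V E}

/-- A partial alternating walk respecting signs and capacities of `g`. -/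
structure PreWalk (G : SeqGraph V E) (g : E → ℤ) where
  k : ℕ
  hk : 1 ≤ k
  e : ℕ → E
  v : ℕ → V
  a : V
  compat : ∀ i < k, G.ends (e i) = s(if i = 0 then a else v (i - 1), v i)
  sign : ∀ i < k, 0 < (-1 : ℤ) ^ i * g (e i)
  cap : ∀ x : E, (((Finset.range k).filter fun i => e i = x).card : ℤ) ≤ |g x|

variable {g : E → ℤ}

def PreWalk.cnt (W : G.PreWalk g) (x : E) : ℕ :=
  ((Finset.range W.k).filter fun i => W.e i = x).card

def PreWalk.w (W : G.PreWalk g) (x : E) : ℤ :=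
  ∑ i ∈ Finset.range W.k, if W.e i = x then (-1 : ℤ) ^ i else 0

lemma PreWalk.sum_cnt (W : G.PreWalk g) : ∑ x : E, (W.cnt x : ℤ) = W.k := by
  have : ∀ x : E, (W.cnt x : ℤ) = ∑ i ∈ Finset.range W.k, if W.e i = x then (1 : ℤ) else 0 := by
    intro x
    rw [← Finset.sum_filter]
    simp [PreWalk.cnt]
  simp only [this]
  rw [Finset.sum_comm]
  simp [Finset.sum_ite_eq]

lemma PreWalk.w_eq (W : G.PreWalk g) (x : E) :
    W.w x = (if 0 < g x then 1 else -1) * W.cnt x := by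
  unfold PreWalk.w PreWalk.cnt
  rw [← Finset.sum_filter]
  rcases lt_trichotomy (g x) 0 with hg | hg | hg
  · have : ∀ i ∈ (Finset.range W.k).filter fun i => W.e i = x, (-1 : ℤ) ^ i = -1 := by
      intro i hi
      simp only [Finset.mem_filter, Finset.mem_range] at hi
      have hs := W.sign i hi.1
      rw [hi.2] at hs
      rcases Nat.even_or_odd i with he | he
      · exfalso; rw [he.neg_one_pow] at hs; omega
      · rw [he.neg_one_pow]
    rw [Finset.sum_congr rfl this]
    have : ¬ (0 < g x) := by omega
    simp [this, mul_comm]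
  · have : (Finset.range W.k).filter (fun i => W.e i = x) = ∅ := by
      rw [Finset.filter_eq_empty_iff]
      intro i hi hx
      have hs := W.sign i (Finset.mem_range.mp hi)
      rw [hx, hg] at hs; simp at hs
    simp [this, hg]
  · have : ∀ i ∈ (Finset.range W.k).filter fun i => W.e i = x, (-1 : ℤ) ^ i = 1 := by
      intro i hi
      simp only [Finset.mem_filter, Finset.mem_range] at hi
      have hs := W.sign i hi.1
      rw [hi.2] at hs
      rcases Nat.even_or_odd i with he | he
      · rw [he.neg_one_pow]
      · exfalso; rw [he.neg_one_pow] at hs; omega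
    rw [Finset.sum_congr rfl this]
    simp [hg]

lemma PreWalk.w_between (W : G.PreWalk g) (x : E) :
    (0 ≤ g x → 0 ≤ W.w x ∧ W.w x ≤ g x) ∧ (g x ≤ 0 → g x ≤ W.w x ∧ W.w x ≤ 0) := by
  have hcap := W.cap x
  have hw := W.w_eq x
  have hc0 : (0 : ℤ) ≤ W.cnt x := by positivity
  change ((W.cnt x : ℤ)) ≤ |g x| at hcap
  by_cases hg : 0 < g x
  · rw [if_pos hg] at hw
    rw [abs_of_pos hg] at hcap
    omega
  · rw [if_neg hg] at hw
    rw [abs_of_nonpos (by omega)] at hcap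
    omega

end SeqGraph
namespace SeqGraph

variable {V E : Type} [Fintype V] [Fintype E] {G : SeqGraph V E} {g : E → ℤ}

set_option linter.unusedSectionVars false

lemma tele_aux (e : ℕ → E) (v : ℕ → V) (a : V) :
    ∀ k : ℕ, 1 ≤ k → (∀ i < k, G.ends (e i) = s(if i = 0 then a else v (i - 1), v i)) →
      ∀ u : V, ∑ i ∈ Finset.range k, (-1 : ℤ) ^ i * G.mult u (e i)
        = (if u = a then 1 else 0) + (-1 : ℤ) ^ (k - 1) * (if u = v (k - 1) then 1 else 0) := by
  intro k
  induction k with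
  | zero => omega
  | succ n ih =>
    intro _ hcompat u
    rcases Nat.eq_zero_or_pos n with hn | hn
    · subst hn
      rw [Finset.sum_range_one]
      rw [mult_eq (by simpa using hcompat 0 (by omega)) u]
      ring
    · rw [Finset.sum_range_succ]
      rw [ih hn (fun i hi => hcompat i (by omega)) u]
      have hc := hcompat n (by omega)
      rw [if_neg (by omega : ¬ n = 0)] at hc
      rw [mult_eq hc u]
      have h1 : (n : ℕ) + 1 - 1 = n := by omega
      have h2 : (-1 : ℤ) ^ (n - 1) = -(-1 : ℤ) ^ n := by
        have : n - 1 + 1 = n := by omega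
        calc (-1 : ℤ) ^ (n - 1) = (-1 : ℤ) ^ (n - 1 + 1) * (-1) := by ring
        _ = -(-1:ℤ)^n := by rw [this]; ring
      rw [h1, h2]
      ring

lemma PreWalk.sum_mult_w (W : G.PreWalk g) (u : V) :
    ∑ x : E, G.mult u x * W.w x = ∑ i ∈ Finset.range W.k, (-1 : ℤ) ^ i * G.mult u (W.e i) := by
  unfold PreWalk.w
  simp_rw [Finset.mul_sum, mul_ite, mul_zero]
  rw [Finset.sum_comm]
  refine Finset.sum_congr rfl fun i _ => ?_
  rw [Finset.sum_ite_eq]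
  simp [mul_comm]

lemma PreWalk.tele (W : G.PreWalk g) (u : V) :
    ∑ x : E, G.mult u x * W.w x
      = (if u = W.a then 1 else 0)
        + (-1 : ℤ) ^ (W.k - 1) * (if u = W.v (W.k - 1) then 1 else 0) := by
  rw [W.sum_mult_w u]
  exact tele_aux W.e W.v W.a W.k W.hk W.compat u

lemma PreWalk.extend (W : G.PreWalk g) (hzs : G.ZeroSum g)
    (hnc : ¬ (W.v (W.k - 1) = W.a ∧ Even W.k)) :
    ∃ x : E, W.v (W.k - 1) ∈ G.ends x ∧ 0 < (-1 : ℤ) ^ W.k * g x ∧ (W.cnt x : ℤ) < |g x| := by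
  by_contra hcon
  push_neg at hcon
  set b := W.v (W.k - 1) with hb
  set s := (-1 : ℤ) ^ W.k with hs
  have hss : s * s = 1 := by
    rw [hs, ← pow_add]
    exact Even.neg_one_pow ⟨W.k, rfl⟩
  have hpow : (-1 : ℤ) ^ (W.k - 1) = -s := by
    have hk1 := W.hk
    have h1 : W.k - 1 + 1 = W.k := by omega
    calc (-1 : ℤ) ^ (W.k - 1) = (-1 : ℤ) ^ (W.k - 1 + 1) * (-1) := by ring
    _ = -s := by rw [h1, hs]; ring
  have hT : ∑ x : E, G.mult b x * (g x - W.w x) = -(if b = W.a then 1 else 0) + s := by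
    have h1 : ∑ x : E, G.mult b x * (g x - W.w x)
        = ∑ x : E, G.mult b x * g x - ∑ x : E, G.mult b x * W.w x := by
      rw [← Finset.sum_sub_distrib]
      exact Finset.sum_congr rfl fun x _ => by ring
    rw [h1, hzs b, W.tele b, hpow]
    simp
    rw [if_pos hb]
    ring
  have hterm : ∀ x : E, s * (G.mult b x * (g x - W.w x)) ≤ 0 := by
    intro x
    by_cases hmem : b ∈ G.ends x
    · by_cases hsg : 0 < s * g x
      · -- capacity saturated, so w x = g x
        have hle := hcon x hmem hsg
        have hcap := W.cap x
        have hcnt : (W.cnt x : ℤ) = |g x| := le_antisymm hcap hle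
        have hw := W.w_eq x
        have hgne : g x ≠ 0 := by
          intro h0; rw [h0] at hsg; simp at hsg
        have hwx : W.w x = g x := by
          by_cases hg : 0 < g x
          · rw [hw, if_pos hg, hcnt, abs_of_pos hg]; ring
          · rw [hw, if_neg hg, hcnt, abs_of_nonpos (by omega)]; ring
        rw [hwx]
        simp
      · -- s * g x ≤ 0
        have hbet := W.w_between x
        have hs1 : s = 1 ∨ s = -1 := by
          rcases Nat.even_or_odd W.k with h | h
          · left; rw [hs]; exact h.neg_one_pow
          · right; rw [hs]; exact h.neg_one_pow
        have hmn := mult_nonneg (G := G) b x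
        rcases hs1 with h1 | h1
        · rw [h1] at hsg ⊢
          have hgx : g x ≤ 0 := by omega
          have := (hbet.2 hgx).1
          nlinarith
        · rw [h1] at hsg ⊢
          have hgx : 0 ≤ g x := by nlinarith
          have := (hbet.1 hgx).2
          nlinarith
    · rw [mult_zero_of_not_mem hmem]
      simp
  have hsum : s * ∑ x : E, G.mult b x * (g x - W.w x) ≤ 0 := by
    rw [Finset.mul_sum]
    exact Finset.sum_nonpos fun x _ => hterm x
  rw [hT] at hsum
  have hexp : s * (-(if b = W.a then 1 else 0) + s) = 1 - s * (if b = W.a then 1 else 0) := by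
    rw [mul_add, hss]; ring
  rw [hexp] at hsum
  by_cases hba : b = W.a
  · have hkodd : ¬ Even W.k := fun h => hnc ⟨hba, h⟩
    have : s = -1 := (Nat.not_even_iff_odd.mp hkodd).neg_one_pow
    rw [if_pos hba, this] at hsum
    norm_num at hsum
  · rw [if_neg hba] at hsum
    norm_num at hsum

end SeqGraph
namespace SeqGraph

variable {V E : Type} [Fintype V] [Fintype E] {G : SeqGraph V E} {g : E → ℤ}

set_option linter.unusedSectionVars false

lemma PreWalk.k_le (W : G.PreWalk g) : (W.k : ℤ) ≤ l1 g := by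
  rw [← W.sum_cnt]
  exact Finset.sum_le_sum fun x _ => W.cap x

/-- Step: extend a non-closed walk by one edge. -/
lemma PreWalk.step (W : G.PreWalk g) (hzs : G.ZeroSum g)
    (hnc : ¬ (W.v (W.k - 1) = W.a ∧ Even W.k)) :
    ∃ W' : G.PreWalk g, W'.k = W.k + 1 ∧ W'.a = W.a := by
  obtain ⟨x, hmem, hsgn, hcap⟩ := W.extend hzs hnc
  obtain ⟨c, hc⟩ := Sym2.mem_iff_exists.mp hmem
  have hk := W.hk
  refine ⟨⟨W.k + 1, by omega,
    (fun i => if i = W.k then x else W.e i),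
    (fun i => if i = W.k then c else W.v i), W.a, ?_, ?_, ?_⟩, rfl, rfl⟩
  · intro i hi
    beta_reduce
    rcases Nat.lt_or_ge i W.k with h | h
    · have h1 : ¬ i = W.k := by omega
      have h2 : ¬ i - 1 = W.k := by omega
      simp only [if_neg h1, if_neg h2]
      exact W.compat i h
    · have h1 : i = W.k := by omega
      subst h1
      simp only [if_pos rfl, if_neg (by omega : ¬ W.k = 0),
        if_neg (by omega : ¬ W.k - 1 = W.k)]
      exact hc
  · intro i hi
    beta_reduce
    rcases Nat.lt_or_ge i W.k with h | h
    · rw [if_neg (by omega : ¬ i = W.k)]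
      exact W.sign i h
    · have h1 : i = W.k := by omega
      subst h1
      rw [if_pos rfl]
      exact hsgn
  · intro y
    have hsplit : (Finset.range (W.k + 1)).filter
          (fun i => (if i = W.k then x else W.e i) = y)
        = ((Finset.range W.k).filter fun i => W.e i = y)
          ∪ (if x = y then {W.k} else ∅) := by
      rw [Finset.range_add_one]
      ext i
      simp only [Finset.mem_filter, Finset.mem_union, Finset.mem_insert, Finset.mem_range]
      by_cases hi : i = W.k
      · subst hi
        simp only [if_pos rfl]
        by_cases hxy : x = y <;> simp [hxy]
      · simp only [if_neg hi]
        by_cases hxy : x = y <;> simp [hxy, hi] <;> omega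
    rw [hsplit]
    by_cases hxy : x = y
    · subst hxy
      rw [if_pos rfl]
      have hdisj : Disjoint ((Finset.range W.k).filter fun i => W.e i = x) {W.k} := by
        simp [Finset.disjoint_singleton_right]
      rw [Finset.card_union_of_disjoint hdisj, Finset.card_singleton]
      have := hcap
      unfold PreWalk.cnt at this
      push_cast
      omega
    · rw [if_neg hxy]
      simpa using W.cap y

/-- Iterate until a closed even walk is obtained. -/
lemma closed_rec (hzs : G.ZeroSum g) :
    ∀ m : ℕ, ∀ W : G.PreWalk g, (l1 g).toNat + 1 - W.k ≤ m →
      ∃ W' : G.PreWalk g, W'.v (W'.k - 1) = W'.a ∧ Even W'.k := by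
  intro m
  induction m with
  | zero =>
    intro W hW
    exfalso
    have h1 := W.k_le
    have h2 : (0 : ℤ) ≤ l1 g := Finset.sum_nonneg fun x _ => abs_nonneg _
    omega
  | succ n ih =>
    intro W hW
    by_cases hc : W.v (W.k - 1) = W.a ∧ Even W.k
    · exact ⟨W, hc⟩
    · obtain ⟨W', hk', _⟩ := W.step hzs hc
      apply ih W'
      have h1 := W.k_le
      have h2 : (0 : ℤ) ≤ l1 g := Finset.sum_nonneg fun x _ => abs_nonneg _
      omega

lemma exists_closed (hzs : G.ZeroSum g) (hx : ∃ x : E, 0 < g x) :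
    ∃ W : G.PreWalk g, W.v (W.k - 1) = W.a ∧ Even W.k := by
  obtain ⟨x0, hx0⟩ := hx
  obtain ⟨p, q, hpq⟩ : ∃ p q : V, G.ends x0 = s(p, q) := by
    induction G.ends x0 using Sym2.ind with
    | _ p q => exact ⟨p, q, rfl⟩
  have hW0 : ∃ W : G.PreWalk g, True := by
    refine ⟨⟨1, le_refl 1, fun _ => x0, fun _ => q, p, ?_, ?_, ?_⟩, trivial⟩
    · intro i hi
      have : i = 0 := by omega
      subst this
      simpa using hpq
    · intro i hi
      have : i = 0 := by omega
      subst this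
      simpa using hx0
    · intro y
      by_cases hy : x0 = y
      · subst hy
        have h0 : ((Finset.range 1).filter fun _ => x0 = x0) = Finset.range 1 :=
          Finset.filter_true_of_mem (fun _ _ => rfl)
        rw [h0, Finset.card_range, abs_of_pos hx0]
        omega
      · have : ((Finset.range 1).filter fun _ => x0 = y) = ∅ := by
          simp [hy]
        rw [this]
        simpa using abs_nonneg (g y)
  obtain ⟨W, -⟩ := hW0
  exact closed_rec hzs ((l1 g).toNat + 1 - W.k) W (le_refl _)

end SeqGraph
namespace SeqGraph

variable {V E : Type} [Fintype V] [Fintype E] {G : SeqGraph V E} {g : E → ℤ}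

set_option linter.unusedSectionVars false

lemma one_le_mult {u : V} {x : E} (h : u ∈ G.ends x) : 1 ≤ G.mult u x := by
  unfold mult
  by_cases h1 : G.ends x = s(u, u)
  · rw [if_pos h1]; norm_num
  · rw [if_neg h1, if_pos h]

lemma zmod_val_sub_one {L : ℕ} [NeZero L] (i : ZMod L) :
    (i - 1).val = if i.val = 0 then L - 1 else i.val - 1 := by
  have hL : 0 < L := Nat.pos_of_ne_zero (NeZero.ne L)
  by_cases h : i.val = 0
  · have hi0 : i = 0 := by
      have h2 := ZMod.natCast_rightInverse (n := L) i
      rw [h] at h2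
      simpa using h2.symm
    subst hi0
    rw [if_pos h]
    have h1 : ((L - 1 : ℕ) : ZMod L) = 0 - 1 := by
      have h2 : ((L - 1 : ℕ) : ZMod L) + 1 = ((L - 1 + 1 : ℕ) : ZMod L) := by push_cast; ring
      have h3 : L - 1 + 1 = L := by omega
      rw [h3, ZMod.natCast_self] at h2
      linear_combination h2
    rw [← h1, ZMod.val_cast_of_lt (by omega)]
  · rw [if_neg h]
    have hlt : i.val < L := ZMod.val_lt i
    have h1 : i - 1 = ((i.val - 1 : ℕ) : ZMod L) := by
      have h2 : ((i.val - 1 : ℕ) : ZMod L) + 1 = ((i.val - 1 + 1 : ℕ) : ZMod L) := by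
        push_cast; ring
      have h3 : i.val - 1 + 1 = i.val := by omega
      rw [h3, ZMod.natCast_rightInverse i] at h2
      linear_combination -h2
    rw [h1, ZMod.val_cast_of_lt (by omega)]

lemma zmod_sum {L : ℕ} [NeZero L] (F : ℕ → ℤ) :
    ∑ i : ZMod L, F i.val = ∑ j ∈ Finset.range L, F j := by
  rw [← Fin.sum_univ_eq_sum_range]
  refine (Fintype.sum_bijective (fun j : Fin L => ((j : ℕ) : ZMod L)) ?_
    (fun j : Fin L => F (j : ℕ)) (fun i : ZMod L => F i.val) ?_).symm
  · constructor
    · intro a b hab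
      simp only at hab
      have ha := ZMod.val_cast_of_lt (n := L) a.isLt
      have hb := ZMod.val_cast_of_lt (n := L) b.isLt
      apply Fin.ext
      rw [← ha, ← hb, hab]
    · intro z
      exact ⟨⟨z.val, ZMod.val_lt z⟩, ZMod.natCast_rightInverse z⟩
  · intro j
    rw [ZMod.val_cast_of_lt j.isLt]

lemma parity_eq {a b : ℕ} {c : ℤ} (h1 : 0 < (-1 : ℤ) ^ a * c) (h2 : 0 < (-1 : ℤ) ^ b * c) :
    a % 2 = b % 2 := by
  rcases Nat.even_or_odd a with ha | ha <;> rcases Nat.even_or_odd b with hb | hb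
  · rw [Nat.even_iff] at ha hb; omega
  · rw [ha.neg_one_pow] at h1; rw [hb.neg_one_pow] at h2; omega
  · rw [ha.neg_one_pow] at h1; rw [hb.neg_one_pow] at h2; omega
  · rw [Nat.odd_iff] at ha hb; omega

lemma PreWalk.abs_w (W : G.PreWalk g) (x : E) : |W.w x| = W.cnt x := by
  rw [W.w_eq, abs_mul]
  by_cases h : 0 < g x <;> simp [h]

lemma PreWalk.zeroSum_w (W : G.PreWalk g) (hclosed : W.v (W.k - 1) = W.a)
    (heven : Even W.k) : G.ZeroSum W.w := by
  intro u
  rw [W.tele u, hclosed]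
  have hk := W.hk
  have hodd : Odd (W.k - 1) := by
    rw [Nat.odd_iff]; rw [Nat.even_iff] at heven; omega
  rw [hodd.neg_one_pow]
  ring

end SeqGraph

set_option maxHeartbeats 1000000 in
/-- A nonzero minimal integer flow is the alternating flow of a tight
even-length cycle traversal whose length is `‖f‖₁`. -/
theorem stmt_13 (V E : Type) [Fintype V] [Fintype E] (G : SeqGraph V E)
    (f : E → ℤ) (hf : G.IsFlow f) (hne : f ≠ 0) (hmin : G.MinimalFlow f) :
    ∃ t : G.CycleTraversal,
      Even t.L ∧ (t.L : ℤ) = SeqGraph.l1 f ∧ t.Tight ∧ t.altFlow = f := by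
  classical
  set g : E → ℤ := G.conj f with hgdef
  have hfc : G.conj g = f := by rw [hgdef, SeqGraph.conj_conj]
  have hzs : G.ZeroSum g := (SeqGraph.isFlow_iff_zeroSum f).mp hf
  have hgne : g ≠ 0 := by
    intro h
    apply hne
    rw [← hfc, h]
    funext x
    simp [SeqGraph.conj]
  -- there is an edge with positive g value
  have hpos : ∃ x : E, 0 < g x := by
    obtain ⟨x0, hx0⟩ := Function.ne_iff.mp hgne
    rcases lt_or_gt_of_ne (by simpa using hx0 : g x0 ≠ 0) with hneg | hposx
    · obtain ⟨p, q, hpq⟩ : ∃ p q : V, G.ends x0 = s(p, q) := by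
        induction G.ends x0 using Sym2.ind with
        | _ p q => exact ⟨p, q, rfl⟩
      by_contra hno
      push_neg at hno
      have hlt : ∑ x : E, G.mult p x * g x < ∑ _x : E, (0 : ℤ) := by
        refine Finset.sum_lt_sum
          (fun x _ => mul_nonpos_of_nonneg_of_nonpos (SeqGraph.mult_nonneg p x) (hno x))
          ⟨x0, Finset.mem_univ _, ?_⟩
        have h1 : 1 ≤ G.mult p x0 :=
          SeqGraph.one_le_mult (by rw [hpq]; exact Sym2.mem_mk_left p q)
        nlinarith
      rw [hzs p] at hlt
      simp at hlt
    · exact ⟨x0, hposx⟩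
  obtain ⟨W, hclosed, heven⟩ := SeqGraph.exists_closed hzs hpos
  have hk1 := W.hk
  haveI : NeZero W.k := ⟨by omega⟩
  have hzsw : G.ZeroSum W.w := W.zeroSum_w hclosed heven
  -- by minimality, the walk accounts for all of g
  have hwg : W.w = g := by
    by_contra hne2
    apply hmin
    refine ⟨G.conj W.w, G.conj (fun x => g x - W.w x), ?_, ?_, ?_, ?_, ?_, ?_⟩
    · rw [SeqGraph.isFlow_iff_zeroSum, SeqGraph.conj_conj]
      exact hzsw
    · rw [SeqGraph.isFlow_iff_zeroSum, SeqGraph.conj_conj]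
      intro u
      have h1 := hzs u
      have h2 := hzsw u
      have h3 : ∑ x : E, G.mult u x * (g x - W.w x)
          = (∑ x : E, G.mult u x * g x) - ∑ x : E, G.mult u x * W.w x := by
        rw [← Finset.sum_sub_distrib]
        exact Finset.sum_congr rfl fun x _ => by ring
      rw [h3, h1, h2]
      ring
    · intro h
      have hw0 := SeqGraph.conj_eq_zero h
      have hcnt : 1 ≤ W.cnt (W.e 0) := by
        rw [Nat.one_le_iff_ne_zero, ← Nat.pos_iff_ne_zero]
        apply Finset.card_pos.mpr
        exact ⟨0, by simp; omega⟩
      have habs := W.abs_w (W.e 0)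
      rw [hw0] at habs
      simp at habs
      omega
    · intro h
      have h2 := SeqGraph.conj_eq_zero h
      apply hne2
      funext x
      have h3 := congrFun h2 x
      simp only [Pi.zero_apply] at h3
      linarith [h3]
    · funext x
      rw [← hfc]
      show G.conj g x = G.conj W.w x + G.conj (fun x => g x - W.w x) x
      unfold SeqGraph.conj
      by_cases hs : G.seg x <;> simp [hs] <;> ring
    · rw [SeqGraph.l1_conj, SeqGraph.l1_conj]
      have h1 : SeqGraph.l1 f = SeqGraph.l1 g := (SeqGraph.l1_conj (G := G) f).symm
      rw [h1]
      unfold SeqGraph.l1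
      rw [← Finset.sum_add_distrib]
      refine Finset.sum_congr rfl fun x _ => ?_
      have hb := W.w_between x
      rcases le_or_gt 0 (g x) with hg | hg
      · obtain ⟨hw0, hwg⟩ := hb.1 hg
        rw [abs_of_nonneg hg, abs_of_nonneg hw0, abs_of_nonneg (by omega : (0:ℤ) ≤ g x - W.w x)]
        ring
      · obtain ⟨hgw, hw0⟩ := hb.2 (le_of_lt hg)
        rw [abs_of_neg hg, abs_of_nonpos hw0, abs_of_nonpos (by omega : g x - W.w x ≤ 0)]
        ring
  have hlen : (W.k : ℤ) = SeqGraph.l1 f := by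
    have h1 : SeqGraph.l1 f = SeqGraph.l1 g := (SeqGraph.l1_conj (G := G) f).symm
    rw [h1, ← W.sum_cnt]
    unfold SeqGraph.l1
    refine Finset.sum_congr rfl fun x _ => ?_
    calc ((W.cnt x : ℕ) : ℤ) = |W.w x| := (W.abs_w x).symm
    _ = |g x| := by rw [hwg]
  -- the cycle traversal
  refine ⟨⟨W.k, by omega, fun i => W.e i.val, fun i => W.v i.val, ?_⟩, ?_, ?_, ?_, ?_⟩
  · -- compat
    intro i
    beta_reduce
    have hv := SeqGraph.zmod_val_sub_one i
    have hc := W.compat i.val (ZMod.val_lt i)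
    by_cases h0 : i.val = 0
    · rw [hv, if_pos h0, h0]
      rw [h0, if_pos rfl] at hc
      rw [hc, hclosed]
    · rw [hv, if_neg h0]
      rw [if_neg h0] at hc
      exact hc
  · -- even length
    exact heven
  · -- length equals l1 f
    exact hlen
  · -- tight
    intro i j hij
    simp only at hij
    exact SeqGraph.parity_eq (W.sign i.val (ZMod.val_lt i))
      (hij ▸ W.sign j.val (ZMod.val_lt j))
  · -- altFlow = f
    show G.conj (fun x => ∑ i : ZMod W.k, if W.e i.val = x then (-1 : ℤ) ^ i.val else 0) = f
    have haw : (fun x => ∑ i : ZMod W.k, if W.e i.val = x then (-1 : ℤ) ^ i.val else 0)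
        = W.w := by
      funext x
      rw [SeqGraph.zmod_sum (fun j => if W.e j = x then (-1 : ℤ) ^ j else 0)]
      rfl
    rw [haw, hwg, hfc]
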